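/- If X has a countable base and X × Y contains an uncountable left separated subspace of length ω₁, then Y contains an uncountable left separated subspace. -/

import Mathlib

open Set

/-- `f` restricted to the ordinals below `κ` enumerates a left separated family:
each point `f β` has an open neighborhood avoiding all points `f α` with `α < β`. -/
def IsLeftSeparatedFamily {X : Type*} [TopologicalSpace X]
    (κ : Ordinal) (f : Ordinal → X) : Prop :=
  ∀ β < κ, ∃ U : Set X, IsOpen U ∧ f β ∈ U ∧ ∀ α < β, f α ∉ U

universe u v

lemma lift_aleph_one : Cardinal.lift.{u + 1, u} (Cardinal.aleph 1) = Cardinal.aleph 1 := by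
  rw [Cardinal.lift_aleph, Ordinal.lift_one]

/-- An initial segment below an ordinal of countable cardinality is countable. -/
lemma countable_Iio_of_lt_omega1 {β : Ordinal} (h : β < (Cardinal.aleph 1).ord) :
    (Set.Iio β).Countable := by
  rw [Cardinal.countable_iff_lt_aleph_one, Ordinal.mk_Iio_ordinal]
  have h1 : β.card < Cardinal.aleph 1 := Cardinal.lt_ord.mp h
  rw [← lift_aleph_one]
  exact Cardinal.lift_lt.mpr h1

/-- Enumeration of an (uncountable) set `T` of ordinals: at stage `β`, take the least
element of `T` above all previously chosen elements. -/
noncomputable def enumUncount (T : Set Ordinal) : Ordinal → Ordinal :=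
  Ordinal.lt_wf.fix fun β ih =>
    sInf {x | x ∈ T ∧ ∀ (α : Ordinal) (h : α < β), ih α h < x}

lemma enumUncount_def (T : Set Ordinal) (β : Ordinal) :
    enumUncount T β = sInf {x | x ∈ T ∧ ∀ α < β, enumUncount T α < x} :=
  Ordinal.lt_wf.fix_eq _ β

lemma enumUncount_spec (T : Set Ordinal) (hT : ¬ T.Countable)
    (hsub : T ⊆ Set.Iio (Cardinal.aleph 1).ord) :
    ∀ β < (Cardinal.aleph 1).ord, enumUncount T β ∈ T ∧
      ∀ α < β, enumUncount T α < enumUncount T β := by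
  intro β
  induction β using Ordinal.induction with
  | _ β ih =>
  intro hβ
  have hne : {x | x ∈ T ∧ ∀ α < β, enumUncount T α < x}.Nonempty := by
    by_contra hemp
    rw [Set.not_nonempty_iff_eq_empty] at hemp
    apply hT
    have hcov : T ⊆ ⋃ α ∈ Set.Iio β, Set.Iic (enumUncount T α) := by
      intro x hx
      by_contra hx'
      simp only [Set.mem_iUnion, Set.mem_Iic, not_exists, not_le, Set.mem_Iio] at hx'
      have : x ∈ ({x | x ∈ T ∧ ∀ α < β, enumUncount T α < x} : Set Ordinal) :=
        ⟨hx, fun α hα => hx' α hα⟩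
      rw [hemp] at this
      exact this
    refine Set.Countable.mono hcov ?_
    refine Set.Countable.biUnion (countable_Iio_of_lt_omega1 hβ) ?_
    intro α hα
    have hαω : α < (Cardinal.aleph 1).ord := lt_trans hα hβ
    have heα : enumUncount T α ∈ T := (ih α hα hαω).1
    have heαω : enumUncount T α < (Cardinal.aleph 1).ord := hsub heα
    have hsucc : Order.succ (enumUncount T α) < (Cardinal.aleph 1).ord := by
      have hlim : Order.IsSuccLimit ((Cardinal.aleph 1).ord) :=
        Cardinal.isSuccLimit_ord (Cardinal.aleph0_le_aleph 1)
      exact hlim.succ_lt heαω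
    refine Set.Countable.mono ?_ (countable_Iio_of_lt_omega1 hsucc)
    intro x hx
    exact Set.mem_Iio.mpr (Order.lt_succ_iff.mpr (Set.mem_Iic.mp hx))
  rw [enumUncount_def]
  exact csInf_mem hne

/-- If `X` is second countable and `X × Y` has a left separated family of length `ω₁`,
then `Y` has an uncountable left separated family. -/
theorem left_separated_in_factor
    (X Y : Type*) [TopologicalSpace X] [TopologicalSpace Y]
    [SecondCountableTopology X]
    (f : Ordinal → X × Y)
    (hf : IsLeftSeparatedFamily (Cardinal.aleph 1).ord f) :
    ∃ (κ : Ordinal) (g : Ordinal → Y),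
      Cardinal.aleph0 < κ.card ∧ IsLeftSeparatedFamily κ g := by
  classical
  have key : ∀ β : Ordinal, ∃ (A : Set X) (B : Set Y),
      β < (Cardinal.aleph 1).ord → A ∈ TopologicalSpace.countableBasis X ∧ IsOpen B ∧
        (f β).1 ∈ A ∧ (f β).2 ∈ B ∧ ∀ α < β, f α ∉ A ×ˢ B := by
    intro β
    by_cases hβ : β < (Cardinal.aleph 1).ord
    · obtain ⟨U, hUo, hUm, hUa⟩ := hf β hβ
      have hU : U ∈ nhds (f β) := hUo.mem_nhds hUm
      rw [mem_nhds_prod_iff] at hU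
      obtain ⟨u, hu, v, hv, huv⟩ := hU
      obtain ⟨A, hA, hxA, hAu⟩ :=
        (TopologicalSpace.isBasis_countableBasis X).mem_nhds_iff.mp hu
      obtain ⟨B, hBv, hBo, hyB⟩ := mem_nhds_iff.mp hv
      refine ⟨A, B, fun _ => ⟨hA, hBo, hxA, hyB, fun α hα hmem =>
        hUa α hα (huv ⟨hAu hmem.1, hBv hmem.2⟩)⟩⟩
    · exact ⟨∅, ∅, fun h => absurd h hβ⟩
  choose A B hbox using key
  obtain ⟨b, hbmem, hT⟩ :
      ∃ b ∈ TopologicalSpace.countableBasis X,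
        ¬ ({β | β < (Cardinal.aleph 1).ord ∧ A β = b}).Countable := by
    by_contra h
    push_neg at h
    have hcover : Set.Iio (Cardinal.aleph 1).ord ⊆
        ⋃ b ∈ TopologicalSpace.countableBasis X,
          {β | β < (Cardinal.aleph 1).ord ∧ A β = b} := by
      intro β hβ
      exact Set.mem_biUnion (hbox β hβ).1 ⟨hβ, rfl⟩
    have hcount : (Set.Iio (Cardinal.aleph 1).ord).Countable :=
      ((TopologicalSpace.countable_countableBasis X).biUnion h).mono hcover
    rw [Cardinal.countable_iff_lt_aleph_one, Ordinal.mk_Iio_ordinal, Cardinal.card_ord] at hcount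
    have h2 : Cardinal.lift.{_ + 1} (Cardinal.aleph 1) = Cardinal.aleph 1 := by
      rw [Cardinal.lift_aleph, Ordinal.lift_one]
    rw [h2] at hcount
    exact lt_irrefl _ hcount
  set T : Set Ordinal := {β | β < (Cardinal.aleph 1).ord ∧ A β = b} with hTdef
  have hsub : T ⊆ Set.Iio (Cardinal.aleph 1).ord := fun β hβ => hβ.1
  have hspec := enumUncount_spec T hT hsub
  refine ⟨(Cardinal.aleph 1).ord, fun β => (f (enumUncount T β)).2, ?_, ?_⟩
  · rw [Cardinal.card_ord]
    exact Cardinal.aleph0_lt_aleph_one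
  · intro β hβ
    obtain ⟨heT, hmono⟩ := hspec β hβ
    obtain ⟨hβω, hAb⟩ := heT
    refine ⟨B (enumUncount T β), ((hbox _ hβω).2.1), ((hbox _ hβω).2.2.2.1), ?_⟩
    intro α hα hmem2
    have hαω : α < (Cardinal.aleph 1).ord := lt_trans hα hβ
    obtain ⟨hαT, _⟩ := hspec α hαω
    have hlt : enumUncount T α < enumUncount T β := hmono α hα
    have hnot := (hbox _ hβω).2.2.2.2 (enumUncount T α) hlt
    apply hnot
    refine ⟨?_, hmem2⟩
    have h1 := (hbox _ hαT.1).2.2.1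
    rw [hαT.2] at h1
    rw [hAb]
    exact h1
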